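/- For every multiindex β ∈ ℕ^n and every m ∈ ℕ with |β| ≤ m, the sum over multiindices α ∈ ℕ^n with β ≤ α (componentwise) and |α| ≤ m of the product of binomial coefficients ∏_j C(α_j, β_j) equals C(m + n, |β| + n). -/

import Mathlib

open Finset

/-- Shifted dual Vandermonde identity. -/
lemma vand2 (n : ℕ) : ∀ (k r s : ℕ),
    ∑ ij ∈ Finset.HasAntidiagonal.antidiagonal k, (ij.1).choose r * (ij.2 + n).choose (s + n)
      = (k + n + 1).choose (r + s + n + 1) := by
  intro k
  induction k with
  | zero =>
    intro r s
    simp only [Finset.Nat.antidiagonal_zero, Finset.sum_singleton]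
    match r, s with
    | 0, 0 => simp
    | 0, s + 1 =>
      rw [Nat.choose_eq_zero_of_lt (show 0 + n < s + 1 + n by omega),
        Nat.choose_eq_zero_of_lt (show 0 + n + 1 < 0 + (s + 1) + n + 1 by omega)]
      simp
    | r + 1, s =>
      rw [Nat.choose_zero_succ,
        Nat.choose_eq_zero_of_lt (show 0 + n + 1 < r + 1 + s + n + 1 by omega)]
      simp
  | succ k ih =>
    intro r s
    rw [Finset.Nat.sum_antidiagonal_succ]
    match r with
    | 0 =>
      have h1 : ∀ p : ℕ × ℕ, (p.1 + 1).choose 0 * (p.2 + n).choose (s + n)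
          = (p.1).choose 0 * (p.2 + n).choose (s + n) := by simp
      rw [Finset.sum_congr rfl fun p _ => h1 p, ih 0 s, Nat.choose_zero_right, one_mul,
        show k + 1 + n = k + n + 1 by omega, show 0 + s + n + 1 = s + n + 1 by omega]
      exact (Nat.choose_succ_succ (k + n + 1) (s + n)).symm
    | r + 1 =>
      rw [Nat.choose_zero_succ, zero_mul, zero_add]
      have : ∀ p : ℕ × ℕ, (p.1 + 1).choose (r + 1) * (p.2 + n).choose (s + n)
          = (p.1).choose r * (p.2 + n).choose (s + n)
            + (p.1).choose (r + 1) * (p.2 + n).choose (s + n) := by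
        intro p; rw [Nat.choose_succ_succ, add_mul]
      rw [Finset.sum_congr rfl fun p _ => this p, Finset.sum_add_distrib, ih r s, ih (r + 1) s]
      rw [show r + 1 + s + n + 1 = (r + s + n + 1) + 1 by omega,
        show k + 1 + n + 1 = (k + n + 1) + 1 by omega,
        Nat.choose_succ_succ (k + n + 1) (r + s + n + 1)]

/-- Splitting a sum over `antidiagonalTuple (n+1) k` along the first coordinate. -/
lemma sum_antidiagonalTuple_succ {M : Type*} [AddCommMonoid M] (n k : ℕ)
    (f : (Fin (n + 1) → ℕ) → M) :
    ∑ α ∈ Finset.Nat.antidiagonalTuple (n + 1) k, f α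
      = ∑ p ∈ Finset.HasAntidiagonal.antidiagonal k,
          ∑ t ∈ Finset.Nat.antidiagonalTuple n p.2, f (Fin.cons p.1 t) := by
  rw [Finset.sum_sigma' (Finset.HasAntidiagonal.antidiagonal k)
    (fun p => Finset.Nat.antidiagonalTuple n p.2) (fun p t => f (Fin.cons p.1 t))]
  refine Finset.sum_nbij'
    (fun α => (⟨(α 0, ∑ j : Fin n, α j.succ), Fin.tail α⟩ : Σ _ : ℕ × ℕ, Fin n → ℕ))
    (fun x => Fin.cons x.1.1 x.2) ?_ ?_ ?_ ?_ ?_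
  · intro α hα
    rw [Finset.Nat.mem_antidiagonalTuple] at hα
    refine Finset.mem_sigma.2 ⟨Finset.HasAntidiagonal.mem_antidiagonal.2 ?_, ?_⟩
    · rw [← hα, Fin.sum_univ_succ]
    · exact Finset.Nat.mem_antidiagonalTuple.2 rfl
  · intro x hx
    rw [Finset.mem_sigma] at hx
    obtain ⟨h1, h2⟩ := hx
    rw [Finset.HasAntidiagonal.mem_antidiagonal] at h1
    rw [Finset.Nat.mem_antidiagonalTuple] at h2 ⊢
    rw [Fin.sum_univ_succ]
    simp [h2, h1]
  · intro α _
    simp [Fin.tail]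
  · intro x hx
    rw [Finset.mem_sigma] at hx
    obtain ⟨_, h2⟩ := hx
    rw [Finset.Nat.mem_antidiagonalTuple] at h2
    have : (fun j => Fin.cons (α := fun _ => ℕ) x.1.1 x.2 j.succ) = x.2 := by
      funext j; simp
    simp only [Fin.cons_zero, Fin.tail]
    rw [Sigma.ext_iff]
    constructor
    · rw [Prod.ext_iff]
      exact ⟨rfl, by rw [this, h2]⟩
    · simp [this]
  · intro α _
    simp [Fin.cons_self_tail]

/-- Inner sum: `∑_{|α| = k} ∏ⱼ C(αⱼ, βⱼ) = C(k+n, |β|+n)` for `n+1` variables. -/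
lemma innerChooseSum (n : ℕ) : ∀ (k : ℕ) (β : Fin (n + 1) → ℕ),
    ∑ α ∈ Finset.Nat.antidiagonalTuple (n + 1) k, ∏ j, (α j).choose (β j)
      = (k + n).choose ((∑ j, β j) + n) := by
  induction n with
  | zero =>
    intro k β
    rw [Finset.Nat.antidiagonalTuple_one, Finset.sum_singleton]
    simp [Fin.prod_univ_one, Fin.sum_univ_one]
  | succ n ih =>
    intro k β
    rw [sum_antidiagonalTuple_succ]
    have hprod : ∀ (p : ℕ × ℕ) (t : Fin (n + 1) → ℕ),
        ∏ j, ((Fin.cons (α := fun _ => ℕ) p.1 t) j).choose (β j)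
          = (p.1).choose (β 0) * ∏ j, (t j).choose (β j.succ) := by
      intro p t
      rw [Fin.prod_univ_succ]
      simp
    have : ∀ p : ℕ × ℕ, p ∈ Finset.HasAntidiagonal.antidiagonal k →
        ∑ t ∈ Finset.Nat.antidiagonalTuple (n + 1) p.2,
          ∏ j, ((Fin.cons (α := fun _ => ℕ) p.1 t) j).choose (β j)
        = (p.1).choose (β 0) * (p.2 + n).choose ((∑ j : Fin (n + 1), β j.succ) + n) := by
      intro p _
      rw [Finset.sum_congr rfl fun t _ => hprod p t, ← Finset.mul_sum,
        ih p.2 (fun j => β j.succ)]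
    rw [Finset.sum_congr rfl this, vand2 n k (β 0) (∑ j : Fin (n + 1), β j.succ),
      show (∑ j : Fin (n + 1 + 1), β j) = β 0 + ∑ j : Fin (n + 1), β j.succ from
        Fin.sum_univ_succ β]
    congr 1 <;> omega

/-- For a multiindex `β ∈ ℕⁿ` with `|β| ≤ m`,
`∑_{β ≤ α, |α| ≤ m} ∏ⱼ C(αⱼ, βⱼ) = C(m+n, |β|+n)`.  The sum over `|α| ≤ m`
is organized as a sum over `k = |α| ≤ m` and multiindices with `|α| = k`. -/
theorem sum_choose_multiindex_le (n m : ℕ) (β : Fin n → ℕ)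
    (hβ : ∑ j, β j ≤ m) :
    (∑ k ∈ Finset.range (m + 1),
        ∑ α ∈ (Finset.Nat.antidiagonalTuple n k).filter
          (fun α => ∀ j, β j ≤ α j),
          ∏ j, (α j).choose (β j)) =
      (m + n).choose ((∑ j, β j) + n) := by
  have hfilter : ∀ k, ∑ α ∈ (Finset.Nat.antidiagonalTuple n k).filter
      (fun α => ∀ j, β j ≤ α j), ∏ j, (α j).choose (β j)
      = ∑ α ∈ Finset.Nat.antidiagonalTuple n k, ∏ j, (α j).choose (β j) := by
    intro k
    apply Finset.sum_filter_of_ne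
    intro α _ hne j
    by_contra h
    push_neg at h
    apply hne
    exact Finset.prod_eq_zero (Finset.mem_univ j) (Nat.choose_eq_zero_of_lt h)
  rw [Finset.sum_congr rfl fun k _ => hfilter k]
  cases n with
  | zero =>
    have h0 : ∀ k ∈ Finset.range (m + 1),
        ∑ α ∈ Finset.Nat.antidiagonalTuple 0 k, ∏ j : Fin 0, (α j).choose (β j)
          = if k = 0 then 1 else 0 := by
      intro k _
      cases k with
      | zero => simp [Finset.Nat.antidiagonalTuple_zero_zero]
      | succ k => simp [Finset.Nat.antidiagonalTuple_zero_succ]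
    rw [Finset.sum_congr rfl h0, Finset.sum_ite_eq' (Finset.range (m + 1)) 0 (fun _ => 1)]
    simp
  | succ n =>
    rw [Finset.sum_congr rfl fun k _ => innerChooseSum n k β]
    set B := ∑ j, β j with hB
    have hsplit : Finset.range (m + 1) = Finset.Ico 0 B ∪ Finset.Ico B (m + 1) := by
      rw [Finset.range_eq_Ico, Finset.Ico_union_Ico_eq_Ico (Nat.zero_le B) (by omega)]
    rw [hsplit, Finset.sum_union (by
      apply Finset.Ico_disjoint_Ico_consecutive)]
    have hzero : ∑ k ∈ Finset.Ico 0 B, (k + n).choose (B + n) = 0 := by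
      apply Finset.sum_eq_zero
      intro k hk
      rw [Finset.mem_Ico] at hk
      exact Nat.choose_eq_zero_of_lt (by omega)
    rw [hzero, zero_add, Finset.sum_Ico_eq_sum_range]
    have : ∀ i, (B + i + n).choose (B + n) = (i + (B + n)).choose (B + n) := by
      intro i; congr 1; omega
    rw [Finset.sum_congr rfl fun i _ => this i]
    have hm : m + 1 - B = (m - B) + 1 := by omega
    rw [hm, Nat.sum_range_add_choose (m - B) (B + n)]
    congr 1 <;> omega
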